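/- Let L/K be a finite field extension in characteristic p > 0. Then L/K is normal if and only if the fixed field of Aut_K(L) equals the maximal purely inseparable subextension L^{pi}. -/

import Mathlib

open Polynomial IntermediateField


/-- A finite field extension `L/K` in characteristic `p > 0` is normal if and only if
the fixed field of `Aut_K(L)` equals the maximal purely inseparable subextension
`L^{pi}` (the relative perfect closure of `K` in `L`). -/
theorem stmt19 (K L : Type*) [Field K] [Field L] [Algebra K L] [FiniteDimensional K L]
    (p : ℕ) (hp : p.Prime) [CharP K p] :
    Normal K L ↔
      IntermediateField.fixedField (⊤ : Subgroup (L ≃ₐ[K] L)) = perfectClosure K L := by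
  classical
  haveI hexpK : ExpChar K p := ExpChar.prime hp
  haveI hcharL : CharP L p := charP_of_injective_algebraMap (algebraMap K L).injective p
  haveI hexpL : ExpChar L p := ExpChar.prime hp
  constructor
  · intro hn
    apply le_antisymm
    · intro x hx
      have hfix : ∀ σ : L ≃ₐ[K] L, σ x = x := fun σ => hx ⟨σ, trivial⟩
      have hint : IsIntegral K x := hn.isIntegral x
      rw [mem_perfectClosure_iff_natSepDegree_eq_one,
        Polynomial.natSepDegree_eq_of_splits _ (hn.splits x)]
      have hset : ((minpoly K x).aroots L).toFinset = {x} := by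
        ext y
        simp only [Multiset.mem_toFinset, mem_aroots, Finset.mem_singleton]
        constructor
        · rintro ⟨hne, hy⟩
          obtain ⟨σ, hσ⟩ := minpoly.exists_algEquiv_of_root' hint.isAlgebraic hy
          rw [← hσ, hfix σ]
        · rintro rfl; exact ⟨minpoly.ne_zero hint, minpoly.aeval K _⟩
      rw [hset, Finset.card_singleton]
    · intro x hx
      obtain ⟨n, y, hy⟩ := (mem_perfectClosure_iff_pow_mem p).1 hx
      intro g
      show (g : L ≃ₐ[K] L) x = x
      apply iterateFrobenius_inj L p n
      simp only [iterateFrobenius_def]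
      rw [← map_pow, ← hy, AlgEquiv.commutes]
  · intro h
    set P := perfectClosure K L with hP
    have hfixP : ∀ (σ : L ≃ₐ[K] L) (y : L), y ∈ P → σ y = y := fun σ y hy =>
      (h ▸ hy : y ∈ fixedField (⊤ : Subgroup (L ≃ₐ[K] L))) ⟨σ, trivial⟩
    haveI : FiniteDimensional (↥P) L := FiniteDimensional.right K (↥P) L
    have hbot : fixedField (⊤ : Subgroup (L ≃ₐ[↥P] L)) = ⊥ := by
      refine le_antisymm (fun x hx => ?_) bot_le
      have hx' : ∀ τ : L ≃ₐ[↥P] L, τ x = x := fun τ => hx ⟨τ, trivial⟩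
      have hxP : x ∈ P := by
        rw [← h]
        intro g
        show (g : L ≃ₐ[K] L) x = x
        have hmem : (g : L ≃ₐ[K] L) ∈ P.fixingSubgroup := by
          rw [IntermediateField.mem_fixingSubgroup_iff]
          exact fun y hy => hfixP g y hy
        exact hx' ((fixingSubgroupEquiv P) ⟨(g : L ≃ₐ[K] L), hmem⟩)
      exact ⟨⟨x, hxP⟩, rfl⟩
    haveI hgal : IsGalois (↥P) L := IsGalois.of_fixedField_eq_bot (↥P) L hbot
    rw [normal_iff]
    intro x
    have hint : IsIntegral K x := Algebra.IsIntegral.isIntegral x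
    refine ⟨hint, ?_⟩
    set f : (↥P)[X] := minpoly (↥P) x with hf
    have hintP : IsIntegral (↥P) x := Algebra.IsIntegral.isIntegral x
    have hsplit : Splits (f.map (algebraMap (↥P) L)) := hgal.to_normal.splits x
    set F : L[X] := f.map (algebraMap (↥P) L) with hF
    -- choose a uniform exponent
    have hcoe : ∀ j : ℕ, ∃ n : ℕ, ((f.coeff j : L)) ^ p ^ n ∈ (algebraMap K L).range := by
      intro j
      exact (mem_perfectClosure_iff_pow_mem p).1 (f.coeff j).2
    choose nn hnn using hcoe
    set N : ℕ := (Finset.range (f.natDegree + 1)).sup nn with hN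
    have hcoeffpow : ∀ j : ℕ, (F.coeff j) ^ p ^ N ∈ (algebraMap K L).range := by
      intro j
      by_cases hj : j ≤ f.natDegree
      · have hle : nn j ≤ N := Finset.le_sup (Finset.mem_range.2 (Nat.lt_succ_of_le hj))
        have : p ^ N = p ^ nn j * p ^ (N - nn j) := by
          rw [← pow_add, Nat.add_sub_cancel' hle]
        rw [hF, coeff_map, this, pow_mul]
        obtain ⟨z, hz⟩ := hnn j
        exact ⟨z ^ p ^ (N - nn j), by rw [map_pow, hz]; rfl⟩
      · rw [hF, coeff_map, coeff_eq_zero_of_natDegree_lt (lt_of_not_ge hj), map_zero,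
          zero_pow (pow_ne_zero _ hp.ne_zero)]
        exact ⟨0, map_zero _⟩
    have hlift : F ^ p ^ N ∈ Polynomial.lifts (algebraMap K L) := by
      rw [lifts_iff_coeff_lifts]
      intro m
      rw [← map_iterateFrobenius_expand p, coeff_map]
      rw [coeff_expand (pow_pos hp.pos N)]
      split_ifs with hdvd
      · have : (iterateFrobenius L p N) (F.coeff (m / p ^ N)) = (F.coeff (m / p ^ N)) ^ p ^ N := by
          rw [iterateFrobenius_def]
        rw [this]
        exact hcoeffpow _
      · rw [map_zero]; exact ⟨0, map_zero _⟩
    obtain ⟨g, hg⟩ := (mem_lifts _).1 hlift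
    have hFx : F.eval x = 0 := by
      rw [hF, eval_map, ← aeval_def]
      exact minpoly.aeval (↥P) x
    have hgz : (Polynomial.aeval x) g = 0 := by
      rw [aeval_def, ← eval_map, hg, eval_pow, hFx, zero_pow (pow_ne_zero _ hp.ne_zero)]
    have hFne : F ≠ 0 := by
      rw [hF]
      exact (Polynomial.map_ne_zero_iff (algebraMap (↥P) L).injective).2
        (minpoly.ne_zero hintP)
    have hgne : g ≠ 0 := by
      intro hc
      apply pow_ne_zero (p ^ N) hFne
      rw [← hg, hc, Polynomial.map_zero]
    have hgsplit : Splits (g.map (algebraMap K L)) := by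
      rw [hg]
      exact hsplit.pow _
    exact Splits.of_dvd hgsplit ((Polynomial.map_ne_zero_iff (algebraMap K L).injective).2 hgne)
      (Polynomial.map_dvd _ (minpoly.dvd K x hgz))
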